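/- Let x be s-sparse, ‖y - Ax‖₂ ≤ ε, and let x̃ ∈ ℝ^N be arbitrary with T̂ = supp(x̃, s) its s largest-magnitude indices. Define x̂ by x̂_{T̂} = A_{T̂}† y, x̂_{T̂^c} = 0. If δ_{2s} < 1, then ‖x - x̂‖₂ ≤ √(2/(1-δ_{2s}²)) ‖x - x̃‖₂ + (√(1+δ_s)/(1-δ_{2s})) ε. -/
import Mathlib

open Finset

/-- ℓ2 norm of a vector. -/
noncomputable def l2 {n : ℕ} (v : Fin n → ℝ) : ℝ := Real.sqrt (∑ i, v i ^ 2)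

/-- ℓ1 norm of a vector. -/
noncomputable def l1 {n : ℕ} (v : Fin n → ℝ) : ℝ := ∑ i, |v i|

/-- number of nonzero entries (ℓ0 "norm"). -/
noncomputable def spars {n : ℕ} (v : Fin n → ℝ) : ℕ := Set.ncard {i | v i ≠ 0}

/-- restriction of a vector to an index set (zero off the set). -/
def restr {n : ℕ} (S : Finset (Fin n)) (v : Fin n → ℝ) : Fin n → ℝ :=
  fun i => if i ∈ S then v i else 0

noncomputable def dotp {n : ℕ} (v w : Fin n → ℝ) : ℝ := ∑ i, v i * w i

lemma l2_nonneg {n : ℕ} (v : Fin n → ℝ) : 0 ≤ l2 v := Real.sqrt_nonneg _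

lemma l2_sq {n : ℕ} (v : Fin n → ℝ) : (l2 v) ^ 2 = ∑ i, v i ^ 2 :=
  Real.sq_sqrt (Finset.sum_nonneg fun _ _ => sq_nonneg _)

lemma l2_eq_zero {n : ℕ} {v : Fin n → ℝ} (h : l2 v = 0) : v = 0 := by
  have h2 : ∑ i, v i ^ 2 = 0 := by
    have := l2_sq v; rw [h] at this; simpa using this.symm
  funext i
  have := (Finset.sum_eq_zero_iff_of_nonneg (fun i _ => sq_nonneg (v i))).1 h2 i (Finset.mem_univ i)
  exact pow_eq_zero_iff (n := 2) (by norm_num) |>.1 this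

lemma l2_pos {n : ℕ} {v : Fin n → ℝ} (h : v ≠ 0) : 0 < l2 v := by
  rcases lt_or_eq_of_le (l2_nonneg v) with h1 | h1
  · exact h1
  · exact absurd (l2_eq_zero h1.symm) h

lemma l2_add_sq {n : ℕ} (v w : Fin n → ℝ) :
    (l2 (v + w)) ^ 2 = (l2 v) ^ 2 + 2 * dotp v w + (l2 w) ^ 2 := by
  simp only [l2_sq, Pi.add_apply, dotp, Finset.mul_sum]
  rw [← Finset.sum_add_distrib, ← Finset.sum_add_distrib]
  exact Finset.sum_congr rfl fun i _ => by ring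

lemma l2_sub_sq {n : ℕ} (v w : Fin n → ℝ) :
    (l2 (v - w)) ^ 2 = (l2 v) ^ 2 - 2 * dotp v w + (l2 w) ^ 2 := by
  simp only [l2_sq, Pi.sub_apply, dotp, Finset.mul_sum]
  rw [← Finset.sum_sub_distrib, ← Finset.sum_add_distrib]
  exact Finset.sum_congr rfl fun i _ => by ring

lemma l2_smul {n : ℕ} (c : ℝ) (hc : 0 ≤ c) (v : Fin n → ℝ) : l2 (c • v) = c * l2 v := by
  unfold l2
  have h : ∑ i, (c • v) i ^ 2 = c ^ 2 * ∑ i, v i ^ 2 := by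
    rw [Finset.mul_sum]; exact Finset.sum_congr rfl fun i _ => by simp [mul_pow]
  rw [h, Real.sqrt_mul (sq_nonneg c), Real.sqrt_sq hc]

lemma dotp_smul {n : ℕ} (c d : ℝ) (v w : Fin n → ℝ) :
    dotp (c • v) (d • w) = c * d * dotp v w := by
  unfold dotp; rw [Finset.mul_sum]
  exact Finset.sum_congr rfl fun i _ => by simp; ring

lemma abs_dotp_le {n : ℕ} (v w : Fin n → ℝ) : |dotp v w| ≤ l2 v * l2 w := by
  have h := Finset.sum_mul_sq_le_sq_mul_sq Finset.univ v w
  have h2 : |dotp v w| = Real.sqrt ((dotp v w) ^ 2) := (Real.sqrt_sq_eq_abs _).symm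
  rw [h2]
  calc Real.sqrt ((dotp v w) ^ 2)
      ≤ Real.sqrt ((∑ i, v i ^ 2) * ∑ i, w i ^ 2) := Real.sqrt_le_sqrt h
    _ = l2 v * l2 w := by
        rw [Real.sqrt_mul (Finset.sum_nonneg fun _ _ => sq_nonneg _)]; rfl

lemma spars_le {n : ℕ} (v : Fin n → ℝ) (T : Set (Fin n)) (h : ∀ i, v i ≠ 0 → i ∈ T) :
    spars v ≤ T.ncard := Set.ncard_le_ncard h (Set.toFinite T)

/-- RIP polarization: inner product distortion. -/
lemma rip_polar {M N : ℕ} (A : Matrix (Fin M) (Fin N) ℝ) (k : ℕ) (δ : ℝ)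
    (hRIP : ∀ v : Fin N → ℝ, spars v ≤ k →
      (1 - δ) * (l2 v) ^ 2 ≤ (l2 (A.mulVec v)) ^ 2 ∧
      (l2 (A.mulVec v)) ^ 2 ≤ (1 + δ) * (l2 v) ^ 2)
    (T : Set (Fin N)) (hT : T.ncard ≤ k)
    (v w : Fin N → ℝ) (hv : ∀ i, v i ≠ 0 → i ∈ T) (hw : ∀ i, w i ≠ 0 → i ∈ T) :
    |dotp (A.mulVec v) (A.mulVec w) - dotp v w| ≤ δ * ((l2 v) ^ 2 + (l2 w) ^ 2) / 2 := by
  have hp : spars (v + w) ≤ k := le_trans (spars_le _ T (fun i hi => by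
    by_cases h : v i ≠ 0
    · exact hv i h
    · push_neg at h
      exact hw i (by simpa [Pi.add_apply, h] using hi))) hT
  have hm : spars (v - w) ≤ k := le_trans (spars_le _ T (fun i hi => by
    by_cases h : v i ≠ 0
    · exact hv i h
    · push_neg at h
      refine hw i ?_
      intro h0
      exact hi (by simp [Pi.sub_apply, h, h0]))) hT
  obtain ⟨hp1, hp2⟩ := hRIP _ hp
  obtain ⟨hm1, hm2⟩ := hRIP _ hm
  have eA : (l2 (A.mulVec (v + w))) ^ 2
      = (l2 (A.mulVec v)) ^ 2 + 2 * dotp (A.mulVec v) (A.mulVec w) + (l2 (A.mulVec w)) ^ 2 := by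
    rw [Matrix.mulVec_add]; exact l2_add_sq _ _
  have eB : (l2 (A.mulVec (v - w))) ^ 2
      = (l2 (A.mulVec v)) ^ 2 - 2 * dotp (A.mulVec v) (A.mulVec w) + (l2 (A.mulVec w)) ^ 2 := by
    rw [Matrix.mulVec_sub]; exact l2_sub_sq _ _
  have ea := l2_add_sq v w
  have eb := l2_sub_sq v w
  have hde1 : δ * (l2 (v + w)) ^ 2 = δ * (l2 v) ^ 2 + 2 * δ * dotp v w + δ * (l2 w) ^ 2 := by
    rw [ea]; ring
  have hde2 : δ * (l2 (v - w)) ^ 2 = δ * (l2 v) ^ 2 - 2 * δ * dotp v w + δ * (l2 w) ^ 2 := by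
    rw [eb]; ring
  have hup2 : (l2 (A.mulVec (v + w))) ^ 2 ≤ (l2 (v + w)) ^ 2 + δ * (l2 (v + w)) ^ 2 := by
    nlinarith [hp2]
  have hlo2 : (l2 (v + w)) ^ 2 - δ * (l2 (v + w)) ^ 2 ≤ (l2 (A.mulVec (v + w))) ^ 2 := by
    nlinarith [hp1]
  have hup3 : (l2 (A.mulVec (v - w))) ^ 2 ≤ (l2 (v - w)) ^ 2 + δ * (l2 (v - w)) ^ 2 := by
    nlinarith [hm2]
  have hlo3 : (l2 (v - w)) ^ 2 - δ * (l2 (v - w)) ^ 2 ≤ (l2 (A.mulVec (v - w))) ^ 2 := by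
    nlinarith [hm1]
  rw [abs_le]
  constructor
  · linarith [hup3, hlo2, hde1, hde2, eA, eB, ea, eb]
  · linarith [hup2, hlo3, hde1, hde2, eA, eB, ea, eb]

/-- RIP inner product bound, scaled form. -/
lemma rip_inner {M N : ℕ} (A : Matrix (Fin M) (Fin N) ℝ) (k : ℕ) (δ : ℝ)
    (hRIP : ∀ v : Fin N → ℝ, spars v ≤ k →
      (1 - δ) * (l2 v) ^ 2 ≤ (l2 (A.mulVec v)) ^ 2 ∧
      (l2 (A.mulVec v)) ^ 2 ≤ (1 + δ) * (l2 v) ^ 2)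
    (T : Set (Fin N)) (hT : T.ncard ≤ k)
    (v w : Fin N → ℝ) (hv : ∀ i, v i ≠ 0 → i ∈ T) (hw : ∀ i, w i ≠ 0 → i ∈ T) :
    |dotp (A.mulVec v) (A.mulVec w) - dotp v w| ≤ δ * l2 v * l2 w := by
  by_cases hzv : v = 0
  · subst hzv
    simp [dotp, Matrix.mulVec_zero, l2]
  by_cases hzw : w = 0
  · subst hzw
    simp [dotp, Matrix.mulVec_zero, l2, mul_comm]
  have hcv : 0 < l2 v := l2_pos hzv
  have hcw : 0 < l2 w := l2_pos hzw
  have key := rip_polar A k δ hRIP T hT (l2 w • v) (l2 v • w)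
    (fun i hi => hv i (by intro h; exact hi (by simp [h])))
    (fun i hi => hw i (by intro h; exact hi (by simp [h])))
  rw [dotp_smul, l2_smul _ hcw.le, l2_smul _ hcv.le] at key
  have hAB : A.mulVec (l2 w • v) = l2 w • A.mulVec v := Matrix.mulVec_smul _ _ _
  have hAB2 : A.mulVec (l2 v • w) = l2 v • A.mulVec w := Matrix.mulVec_smul _ _ _
  rw [hAB, hAB2, dotp_smul] at key
  have e1 : l2 w * l2 v * dotp (A.mulVec v) (A.mulVec w) - l2 w * l2 v * dotp v w
      = (l2 w * l2 v) * (dotp (A.mulVec v) (A.mulVec w) - dotp v w) := by ring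
  rw [e1, abs_mul, abs_of_pos (mul_pos hcw hcv)] at key
  have e2 : δ * ((l2 w * l2 v) ^ 2 + (l2 v * l2 w) ^ 2) / 2
      = (l2 w * l2 v) * (δ * l2 v * l2 w) := by ring
  rw [e2] at key
  exact le_of_mul_le_mul_left key (mul_pos hcw hcv)

/-- small indices lemma. -/
lemma small_indices {N s : ℕ} (x xt : Fin N → ℝ) (hx : spars x ≤ s)
    (Th : Finset (Fin N)) (hThcard : Th.card = s)
    (hTh : ∀ i ∈ Th, ∀ j ∉ Th, |xt j| ≤ |xt i|) :
    (l2 (restr Thᶜ x)) ^ 2 ≤ 2 * (l2 (x - xt)) ^ 2 := by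
  classical
  set S : Finset (Fin N) := Finset.univ.filter (fun i => x i ≠ 0) with hS
  have hScard : S.card ≤ s := by
    have h : spars x = S.card := by
      unfold spars
      rw [← Set.ncard_coe_finset]
      congr 1
      ext i; simp [hS]
    omega
  set U : Finset (Fin N) := S \ Th with hU
  set V : Finset (Fin N) := Th \ S with hV
  have hUV : U.card ≤ V.card := by
    have h1 := Finset.card_sdiff_add_card_inter S Th
    have h2 := Finset.card_sdiff_add_card_inter Th S
    rw [Finset.inter_comm] at h2
    rw [← hU] at h1
    rw [← hV] at h2
    omega
  have hsumUV : ∑ i ∈ U, xt i ^ 2 ≤ ∑ j ∈ V, xt j ^ 2 := by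
    rcases V.eq_empty_or_nonempty with hVe | hVne
    · have hU0 : U.card = 0 := by rw [hVe] at hUV; simpa using hUV
      rw [Finset.card_eq_zero.1 hU0, hVe]
    · obtain ⟨j0, hj0, hmin⟩ := V.exists_min_image (fun j => xt j ^ 2) hVne
      have hstep : ∀ i ∈ U, xt i ^ 2 ≤ xt j0 ^ 2 := by
        intro i hi
        have hiT : i ∉ Th := (Finset.mem_sdiff.1 hi).2
        have hjT : j0 ∈ Th := (Finset.mem_sdiff.1 hj0).1
        have := hTh j0 hjT i hiT
        nlinarith [abs_nonneg (xt i), abs_nonneg (xt j0), sq_abs (xt i), sq_abs (xt j0)]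
      calc ∑ i ∈ U, xt i ^ 2 ≤ U.card • (xt j0 ^ 2) := Finset.sum_le_card_nsmul _ _ _ hstep
        _ ≤ V.card • (xt j0 ^ 2) := by
            have h0 : (0:ℝ) ≤ xt j0 ^ 2 := sq_nonneg _
            simp only [nsmul_eq_mul]
            exact mul_le_mul_of_nonneg_right (by exact_mod_cast hUV) h0
        _ ≤ ∑ j ∈ V, xt j ^ 2 := Finset.card_nsmul_le_sum _ _ _ hmin
  have hrestr : (l2 (restr Thᶜ x)) ^ 2 = ∑ i ∈ U, x i ^ 2 := by
    rw [l2_sq]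
    have e1 : ∀ i, (restr Thᶜ x i) ^ 2 = if i ∈ Thᶜ then x i ^ 2 else 0 := by
      intro i; unfold restr; by_cases h : i ∈ Thᶜ <;> simp [h]
    simp only [e1]
    rw [Finset.sum_ite_mem, Finset.univ_inter]
    refine (Finset.sum_subset ?_ ?_).symm
    · intro i hi
      simp only [hU, Finset.mem_sdiff] at hi
      simpa using hi.2
    · intro i hi hiU
      simp only [Finset.mem_compl] at hi
      simp only [hU, Finset.mem_sdiff, hS, Finset.mem_filter, Finset.mem_univ, true_and] at hiU
      have : x i = 0 := by
        by_contra h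
        exact hiU ⟨h, hi⟩
      simp [this]
  have hVzero : ∀ j ∈ V, xt j ^ 2 = (x j - xt j) ^ 2 := by
    intro j hj
    have hx0 : x j = 0 := by
      have := (Finset.mem_sdiff.1 hj).2
      simp only [hS, Finset.mem_filter, Finset.mem_univ, true_and] at this
      push_neg at this
      exact this
    rw [hx0]; ring
  have hUb : ∑ i ∈ U, x i ^ 2 ≤ 2 * ∑ i ∈ U, (x i - xt i) ^ 2 + 2 * ∑ i ∈ U, xt i ^ 2 := by
    rw [Finset.mul_sum, Finset.mul_sum, ← Finset.sum_add_distrib]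
    refine Finset.sum_le_sum fun i _ => ?_
    nlinarith [sq_nonneg (x i - 2 * xt i)]
  have hdisj : Disjoint U V := by
    refine Finset.disjoint_left.2 fun i hiU hiV => ?_
    exact (Finset.mem_sdiff.1 hiU).2 (Finset.mem_sdiff.1 hiV).1
  have hfinal : ∑ i ∈ U, (x i - xt i) ^ 2 + ∑ j ∈ V, (x j - xt j) ^ 2 ≤ (l2 (x - xt)) ^ 2 := by
    rw [l2_sq, ← Finset.sum_union hdisj]
    have e2 : ∑ i ∈ U ∪ V, (x i - xt i) ^ 2 = ∑ i ∈ U ∪ V, (x - xt) i ^ 2 :=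
      Finset.sum_congr rfl fun i _ => by simp
    rw [e2]
    exact Finset.sum_le_sum_of_subset_of_nonneg (Finset.subset_univ _) fun i _ _ => sq_nonneg _
  have hVsum : ∑ j ∈ V, xt j ^ 2 = ∑ j ∈ V, (x j - xt j) ^ 2 :=
    Finset.sum_congr rfl hVzero
  calc (l2 (restr Thᶜ x)) ^ 2 = ∑ i ∈ U, x i ^ 2 := hrestr
    _ ≤ 2 * ∑ i ∈ U, (x i - xt i) ^ 2 + 2 * ∑ i ∈ U, xt i ^ 2 := hUb
    _ ≤ 2 * ∑ i ∈ U, (x i - xt i) ^ 2 + 2 * ∑ j ∈ V, (x j - xt j) ^ 2 := by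
        rw [← hVsum]; linarith
    _ ≤ 2 * (l2 (x - xt)) ^ 2 := by linarith

lemma quad_bound (dl b a t q : ℝ) (hd0 : 0 ≤ dl) (hd1 : dl < 1) (ht : 0 ≤ t) (ha : 0 ≤ a)
    (hb : 0 ≤ b) (hq : 0 < q) (hq2 : q ^ 2 = 1 - dl ^ 2)
    (hkey : (1 - dl ^ 2) * t ^ 2 ≤ 2 * dl * b * t + b ^ 2 + a ^ 2) :
    t ≤ a / q + b / (1 - dl) := by
  have h1md2 : 0 < 1 - dl ^ 2 := by nlinarith
  have hX2 : ((1 - dl ^ 2) * t - dl * b) ^ 2 ≤ (b + q * a) ^ 2 := by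
    nlinarith [hkey, hq2, mul_nonneg hb (mul_nonneg hq.le ha), h1md2, sq_nonneg a, sq_nonneg b]
  have hX : (1 - dl ^ 2) * t - dl * b ≤ b + q * a := by
    have h0 : 0 ≤ b + q * a := add_nonneg hb (mul_nonneg hq.le ha)
    calc (1 - dl ^ 2) * t - dl * b ≤ |(1 - dl ^ 2) * t - dl * b| := le_abs_self _
      _ = Real.sqrt (((1 - dl ^ 2) * t - dl * b) ^ 2) := (Real.sqrt_sq_eq_abs _).symm
      _ ≤ Real.sqrt ((b + q * a) ^ 2) := Real.sqrt_le_sqrt hX2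
      _ = |b + q * a| := Real.sqrt_sq_eq_abs _
      _ = b + q * a := abs_of_nonneg h0
  rw [div_add_div _ _ (ne_of_gt hq) (by linarith : (1:ℝ) - dl ≠ 0),
    le_div_iff₀ (mul_pos hq (by linarith : (0:ℝ) < 1 - dl))]
  have h1d : (0:ℝ) < 1 + dl := by linarith
  nlinarith [hX, hq2, mul_le_mul_of_nonneg_left hX hq.le, hq, ht, ha, hb, h1d,
    mul_nonneg hq.le hb, mul_nonneg hq.le ha, mul_nonneg (mul_nonneg hq.le hb) hd0]

set_option maxHeartbeats 1000000 in
theorem stmt15 {M N : ℕ} (A : Matrix (Fin M) (Fin N) ℝ)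
    (s : ℕ) (x : Fin N → ℝ) (hx : spars x ≤ s)
    (y : Fin M → ℝ) (ε : ℝ) (hy : l2 (y - A.mulVec x) ≤ ε)
    (xt : Fin N → ℝ)
    (Th : Finset (Fin N)) (hThcard : Th.card = s)
    (hTh : ∀ i ∈ Th, ∀ j ∉ Th, |xt j| ≤ |xt i|)   -- T̂ = indices of the s largest magnitudes of x̃
    (xh : Fin N → ℝ)
    -- x̂ is supported on T̂ and x̂_{T̂} = A_{T̂}† y, characterized by the normal equations
    (hxhsupp : ∀ i ∉ Th, xh i = 0)
    (hxhls : ∀ i ∈ Th, ∑ j, A j i * (A.mulVec xh j - y j) = 0)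
    (δ2s δs : ℝ) (hδ2s : δ2s < 1)
    (hRIP2s : ∀ v : Fin N → ℝ, spars v ≤ 2 * s →
      (1 - δ2s) * (l2 v) ^ 2 ≤ (l2 (A.mulVec v)) ^ 2 ∧
      (l2 (A.mulVec v)) ^ 2 ≤ (1 + δ2s) * (l2 v) ^ 2)
    (hRIPs : ∀ v : Fin N → ℝ, spars v ≤ s →
      (1 - δs) * (l2 v) ^ 2 ≤ (l2 (A.mulVec v)) ^ 2 ∧
      (l2 (A.mulVec v)) ^ 2 ≤ (1 + δs) * (l2 v) ^ 2) :
    l2 (x - xh) ≤ Real.sqrt (2 / (1 - δ2s ^ 2)) * l2 (x - xt) + (Real.sqrt (1 + δs) / (1 - δ2s)) * ε := by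
  classical
  have hε : 0 ≤ ε := le_trans (l2_nonneg _) hy
  have hsmall := small_indices x xt hx Th hThcard hTh
  by_cases hu0 : x - xh = 0
  · rw [hu0]
    have hz : l2 (0 : Fin N → ℝ) = 0 := by simp [l2]
    rw [hz]
    have h1 : 0 ≤ Real.sqrt (2 / (1 - δ2s ^ 2)) * l2 (x - xt) :=
      mul_nonneg (Real.sqrt_nonneg _) (l2_nonneg _)
    have h2 : 0 ≤ Real.sqrt (1 + δs) / (1 - δ2s) * ε :=
      mul_nonneg (div_nonneg (Real.sqrt_nonneg _) (by linarith)) hε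
    linarith
  set u : Fin N → ℝ := x - xh with hu
  set uT : Fin N → ℝ := restr Th u with huT
  set T : Set (Fin N) := {i | x i ≠ 0} ∪ ↑Th with hT
  have hTcard : T.ncard ≤ 2 * s := by
    calc T.ncard ≤ {i | x i ≠ 0}.ncard + (↑Th : Set (Fin N)).ncard := Set.ncard_union_le _ _
      _ ≤ 2 * s := by
          have h2 : (↑Th : Set (Fin N)).ncard = s := by rw [Set.ncard_coe_finset, hThcard]
          have h3 : spars x = {i | x i ≠ 0}.ncard := rfl
          omega
  have hsupp_u : ∀ i, u i ≠ 0 → i ∈ T := by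
    intro i hi
    by_cases hxi : x i = 0
    · right
      by_contra hiT
      exact hi (by simp [hu, Pi.sub_apply, hxi, hxhsupp i (by simpa using hiT)])
    · exact Or.inl hxi
  have hsupp_uT : ∀ i, uT i ≠ 0 → i ∈ T := by
    intro i hi
    have hiTh : i ∈ Th := by
      by_contra h; exact hi (by simp [huT, restr, h])
    exact Or.inr (by simpa using hiTh)
  have hspars_u : spars u ≤ 2 * s := le_trans (spars_le _ T hsupp_u) hTcard
  have hspars_uT : spars uT ≤ s := by
    have h1 : spars uT ≤ (↑Th : Set (Fin N)).ncard := spars_le _ _ (fun i hi => by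
      by_contra h
      have hiTh : i ∉ Th := fun hh => h (Finset.mem_coe.2 hh)
      exact hi (by simp [huT, restr, hiTh]))
    rw [Set.ncard_coe_finset, hThcard] at h1
    exact h1
  have hlu : 0 < l2 u := l2_pos hu0
  have hδ0 : 0 ≤ δ2s := by
    obtain ⟨h1, h2⟩ := hRIP2s u hspars_u
    nlinarith [h1, h2, pow_pos hlu 2]
  -- normal equations
  have hnormal : dotp (A.mulVec uT) (A.mulVec xh - y) = 0 := by
    have e : dotp (A.mulVec uT) (A.mulVec xh - y)
        = ∑ j, ∑ i, uT i * (A j i * (A.mulVec xh j - y j)) := by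
      unfold dotp
      refine Finset.sum_congr rfl fun j _ => ?_
      have hj : (A.mulVec uT) j = ∑ i, A j i * uT i := by
        simp [Matrix.mulVec, dotProduct]
      rw [hj, Finset.sum_mul]
      exact Finset.sum_congr rfl fun i _ => by simp [Pi.sub_apply]; ring
    rw [e, Finset.sum_comm]
    refine Finset.sum_eq_zero fun i _ => ?_
    by_cases h : i ∈ Th
    · rw [← Finset.mul_sum]
      rw [hxhls i h, mul_zero]
    · have : uT i = 0 := by simp [huT, restr, h]
      simp [this]
  have hdsub : ∀ (a b c : Fin M → ℝ), dotp a (b - c) = dotp a b - dotp a c := by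
    intro a b c
    unfold dotp
    rw [← Finset.sum_sub_distrib]
    exact Finset.sum_congr rfl fun i _ => by simp [Pi.sub_apply]; ring
  have hAudecomp : A.mulVec xh - y = (A.mulVec x - A.mulVec u) - y := by
    rw [hu, Matrix.mulVec_sub]
    funext j
    simp [Pi.sub_apply]
  have hdot_split : dotp (A.mulVec uT) (A.mulVec xh - y)
      = - dotp (A.mulVec uT) (A.mulVec u) - dotp (A.mulVec uT) (y - A.mulVec x) := by
    rw [hAudecomp]
    rw [hdsub, hdsub, hdsub]
    ring
  have h1 : dotp (A.mulVec uT) (A.mulVec u) = - dotp (A.mulVec uT) (y - A.mulVec x) := by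
    rw [hdot_split] at hnormal
    linarith
  -- RIP bounds
  have hAuT : l2 (A.mulVec uT) ≤ Real.sqrt (1 + δs) * l2 uT := by
    have h := (hRIPs uT hspars_uT).2
    have h2 : l2 (A.mulVec uT) = Real.sqrt ((l2 (A.mulVec uT)) ^ 2) :=
      (Real.sqrt_sq (l2_nonneg _)).symm
    rw [h2]
    calc Real.sqrt ((l2 (A.mulVec uT)) ^ 2)
        ≤ Real.sqrt ((1 + δs) * (l2 uT) ^ 2) := Real.sqrt_le_sqrt h
      _ = Real.sqrt (1 + δs) * l2 uT := by
          rw [Real.sqrt_mul' _ (sq_nonneg _), Real.sqrt_sq (l2_nonneg _)]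
  have hinner := rip_inner A (2 * s) δ2s hRIP2s T hTcard uT u hsupp_uT hsupp_u
  have hdotuTu : dotp uT u = (l2 uT) ^ 2 := by
    rw [l2_sq]
    unfold dotp
    refine Finset.sum_congr rfl fun i _ => ?_
    by_cases h : i ∈ Th
    · simp [huT, restr, h]; ring
    · simp [huT, restr, h]
  have hCS := abs_dotp_le (A.mulVec uT) (y - A.mulVec x)
  have h4 : l2 (A.mulVec uT) * l2 (y - A.mulVec x) ≤ (Real.sqrt (1 + δs) * l2 uT) * ε :=
    mul_le_mul hAuT hy (l2_nonneg _) (mul_nonneg (Real.sqrt_nonneg _) (l2_nonneg _))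
  have hstep : (l2 uT) ^ 2 ≤ δ2s * l2 uT * l2 u + (Real.sqrt (1 + δs) * ε) * l2 uT := by
    have h2 := abs_le.1 hinner
    have h3 := abs_le.1 hCS
    nlinarith [h2.1, h2.2, h3.1, h3.2, h4, hdotuTu, h1]
  have hb : 0 ≤ Real.sqrt (1 + δs) * ε := mul_nonneg (Real.sqrt_nonneg _) hε
  have huT_le : l2 uT ≤ δ2s * l2 u + Real.sqrt (1 + δs) * ε := by
    rcases eq_or_lt_of_le (l2_nonneg uT) with h | h
    · rw [← h]
      have := mul_nonneg hδ0 (l2_nonneg u)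
      linarith
    · nlinarith [hstep, h]
  -- splitting the norm
  have huc : restr Thᶜ u = restr Thᶜ x := by
    funext i
    unfold restr
    by_cases h : i ∈ Thᶜ
    · simp only [h, if_true, hu, Pi.sub_apply, hxhsupp i (Finset.mem_compl.1 h), sub_zero]
    · simp [h]
  have hsplit : (l2 u) ^ 2 = (l2 uT) ^ 2 + (l2 (restr Thᶜ x)) ^ 2 := by
    rw [← huc, l2_sq, l2_sq, l2_sq, ← Finset.sum_add_distrib]
    refine Finset.sum_congr rfl fun i _ => ?_
    by_cases h : i ∈ Th
    · simp [huT, restr, h, Finset.mem_compl]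
    · simp [huT, restr, h, Finset.mem_compl]
  -- final algebra
  set t := l2 u with htdef
  set a := l2 (restr Thᶜ x) with hadef
  set d := l2 (x - xt) with hddef
  set b := Real.sqrt (1 + δs) * ε with hbdef
  have ha : 0 ≤ a := l2_nonneg _
  have ht : 0 ≤ t := l2_nonneg _
  have hd : 0 ≤ d := l2_nonneg _
  have h1mδ2 : 0 < 1 - δ2s ^ 2 := by nlinarith [hδ0, hδ2s]
  set q := Real.sqrt (1 - δ2s ^ 2) with hqdef
  have hq : 0 < q := Real.sqrt_pos.2 h1mδ2
  have hq2 : q ^ 2 = 1 - δ2s ^ 2 := Real.sq_sqrt h1mδ2.le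
  have hkey : (1 - δ2s ^ 2) * t ^ 2 ≤ 2 * δ2s * b * t + b ^ 2 + a ^ 2 := by
    have huTsq : (l2 uT) ^ 2 ≤ (δ2s * t + b) ^ 2 := by
      have hrhs : 0 ≤ δ2s * t + b := by
        have := mul_nonneg hδ0 ht
        linarith
      nlinarith [huT_le, l2_nonneg uT]
    nlinarith [hsplit, huTsq]
  have hfin : t ≤ a / q + b / (1 - δ2s) :=
    quad_bound δ2s b a t q hδ0 hδ2s ht ha hb hq hq2 hkey
  have had : a ≤ Real.sqrt 2 * d := by
    calc a = Real.sqrt (a ^ 2) := (Real.sqrt_sq ha).symm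
      _ ≤ Real.sqrt (2 * d ^ 2) := Real.sqrt_le_sqrt hsmall
      _ = Real.sqrt 2 * d := by
          rw [Real.sqrt_mul (by norm_num : (0:ℝ) ≤ 2), Real.sqrt_sq hd]
  have e3 : Real.sqrt (2 / (1 - δ2s ^ 2)) = Real.sqrt 2 / q := by
    rw [hqdef, Real.sqrt_div (by norm_num : (0:ℝ) ≤ 2)]
  calc l2 (x - xh) = t := rfl
    _ ≤ a / q + b / (1 - δ2s) := hfin
    _ ≤ (Real.sqrt 2 * d) / q + b / (1 - δ2s) := by
        have := (div_le_div_iff_of_pos_right hq).2 had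
        linarith
    _ = Real.sqrt (2 / (1 - δ2s ^ 2)) * d + Real.sqrt (1 + δs) / (1 - δ2s) * ε := by
        rw [e3, hbdef]
        ring
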